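/- Let n ≥ 3 and let W be the n × n Wielandt matrix as above. Then every entry in column n-1 of W^{n^2-3n+3} is positive; that is, for all u ∈ {1,...,n}, (W^{n^2-3n+3}) u (n-1) > 0. -/

import Mathlib

/-- The `n × n` Wielandt matrix: `W i j = 1` iff (`i ≥ 2` and `j = i - 1`) or
(`i = 1` and `j ∈ {n-1, n}`), written here with 0-based indexing via `Fin n`. -/
def wielandt (n : ℕ) : Matrix (Fin n) (Fin n) ℕ := fun i j =>
  if (1 ≤ i.val ∧ j.val + 1 = i.val) ∨ (i.val = 0 ∧ (j.val = n - 2 ∨ j.val = n - 1))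
  then 1 else 0

lemma wielandt_step_pos {n : ℕ} {i j : Fin n}
    (h : (1 ≤ i.val ∧ j.val + 1 = i.val) ∨ (i.val = 0 ∧ (j.val = n - 2 ∨ j.val = n - 1))) :
    0 < wielandt n i j := by
  simp only [wielandt]
  rw [if_pos h]
  exact one_pos

lemma mul_entry_pos {n : ℕ} (A B : Matrix (Fin n) (Fin n) ℕ) (a b c : Fin n)
    (h1 : 0 < A a b) (h2 : 0 < B b c) : 0 < (A * B) a c := by
  refine lt_of_lt_of_le (Nat.mul_pos h1 h2) ?_
  rw [Matrix.mul_apply]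
  exact Finset.single_le_sum (f := fun j => A a j * B j c)
    (fun j _ => Nat.zero_le _) (Finset.mem_univ b)

lemma pow_entry_mul_pos {n : ℕ} (A : Matrix (Fin n) (Fin n) ℕ) (k m : ℕ) (a b c : Fin n)
    (h1 : 0 < (A ^ k) a b) (h2 : 0 < (A ^ m) b c) : 0 < (A ^ (k + m)) a c := by
  rw [pow_add]
  exact mul_entry_pos _ _ a b c h1 h2

lemma wielandt_desc {n : ℕ} (hn : 3 ≤ n) :
    ∀ m (hm : m < n), 0 < ((wielandt n) ^ m) ⟨m, hm⟩ ⟨0, by omega⟩ := by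
  intro m
  induction m with
  | zero =>
    intro hm
    rw [pow_zero]
    simp [Matrix.one_apply]
  | succ m ih =>
    intro hm
    rw [pow_succ']
    exact mul_entry_pos _ _ _ ⟨m, by omega⟩ _
      (wielandt_step_pos (Or.inl ⟨by simp, rfl⟩)) (ih (by omega))

lemma wielandt_loop_short {n : ℕ} (hn : 3 ≤ n) :
    0 < ((wielandt n) ^ (n - 1)) ⟨0, by omega⟩ ⟨0, by omega⟩ := by
  rw [show n - 1 = 1 + (n - 2) by omega]
  refine pow_entry_mul_pos _ 1 (n - 2) _ ⟨n - 2, Nat.sub_lt (by omega) (by omega)⟩ _ ?_ (wielandt_desc hn _ _)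
  rw [pow_one]
  exact wielandt_step_pos (Or.inr ⟨rfl, Or.inl rfl⟩)

lemma wielandt_loop_long {n : ℕ} (hn : 3 ≤ n) :
    0 < ((wielandt n) ^ n) ⟨0, by omega⟩ ⟨0, by omega⟩ := by
  have h := pow_entry_mul_pos (wielandt n) 1 (n - 1) ⟨0, by omega⟩ ⟨n - 1, by omega⟩
    ⟨0, by omega⟩ (by rw [pow_one]; exact wielandt_step_pos (Or.inr ⟨rfl, Or.inr rfl⟩))
    (wielandt_desc hn _ _)
  rwa [show 1 + (n - 1) = n by omega] at h

lemma wielandt_loops {n : ℕ} (hn : 3 ≤ n) (a b : ℕ) :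
    0 < ((wielandt n) ^ (a * n + b * (n - 1))) ⟨0, by omega⟩ ⟨0, by omega⟩ := by
  induction a with
  | zero =>
    induction b with
    | zero => simp [Matrix.one_apply]
    | succ b ihb =>
      rw [show 0 * n + (b + 1) * (n - 1) = (0 * n + b * (n - 1)) + (n - 1) by ring]
      exact pow_entry_mul_pos _ _ _ _ ⟨0, by omega⟩ _ ihb (wielandt_loop_short hn)
  | succ a iha =>
    rw [show (a + 1) * n + b * (n - 1) = (a * n + b * (n - 1)) + n by ring]
    exact pow_entry_mul_pos _ _ _ _ ⟨0, by omega⟩ _ iha (wielandt_loop_long hn)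

lemma wielandt_to_zero {n : ℕ} (hn : 3 ≤ n) (u : Fin n) :
    0 < ((wielandt n) ^ u.val) u ⟨0, by omega⟩ := by
  have := wielandt_desc hn u.val u.isLt
  simpa using this

lemma wielandt_finish {n : ℕ} (hn : 3 ≤ n) (s : ℕ) (hs : s = 1 ∨ s = 2) :
    0 < ((wielandt n) ^ s) ⟨0, by omega⟩ ⟨n - 2, Nat.sub_lt (by omega) (by omega)⟩ := by
  rcases hs with rfl | rfl
  · rw [pow_one]
    exact wielandt_step_pos (Or.inr ⟨rfl, Or.inl rfl⟩)
  · refine pow_entry_mul_pos _ 1 1 _ ⟨n - 1, by omega⟩ _ ?_ ?_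
    · rw [pow_one]
      exact wielandt_step_pos (Or.inr ⟨rfl, Or.inr rfl⟩)
    · rw [pow_one]
      exact wielandt_step_pos (Or.inl ⟨by simp; omega, by simp; omega⟩)

lemma wielandt_reach {n : ℕ} (hn : 3 ≤ n) (u : Fin n) (a b s : ℕ) (hs : s = 1 ∨ s = 2) :
    0 < ((wielandt n) ^ (u.val + (a * n + b * (n - 1)) + s)) u ⟨n - 2, Nat.sub_lt (by omega) (by omega)⟩ := by
  refine pow_entry_mul_pos _ _ s _ ⟨0, by omega⟩ _ ?_ (wielandt_finish hn s hs)
  exact pow_entry_mul_pos _ _ _ _ ⟨0, by omega⟩ _ (wielandt_to_zero hn u) (wielandt_loops hn a b)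

/-- Every entry in column `n-1` of the `(n^2 - 3n + 3)`-th power of the Wielandt
matrix is positive. -/
theorem wielandt_pow_col_pos (n : ℕ) (hn : 3 ≤ n) :
    ∀ u : Fin n, 0 < (wielandt n ^ (n ^ 2 - 3 * n + 3)) u ⟨n - 2, by omega⟩ := by
  intro u
  have h3n : 3 * n ≤ n ^ 2 := by nlinarith
  have hu : u.val < n := u.isLt
  rcases show u.val = 0 ∨ u.val = 1 ∨ 2 ≤ u.val by omega with h | h | h
  · have he : n ^ 2 - 3 * n + 3 = u.val + (0 * n + (n - 2) * (n - 1)) + 1 := by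
      zify [h3n, show 2 ≤ n by omega, show 1 ≤ n by omega]
      rw [h]
      push_cast
      ring
    rw [he]
    exact wielandt_reach hn u 0 (n - 2) 1 (Or.inl rfl)
  · have he : n ^ 2 - 3 * n + 3 = u.val + ((n - 3) * n + 0 * (n - 1)) + 2 := by
      zify [h3n, show 3 ≤ n by omega, show 1 ≤ n by omega]
      rw [h]
      push_cast
      ring
    rw [he]
    exact wielandt_reach hn u (n - 3) 0 2 (Or.inr rfl)
  · have he : n ^ 2 - 3 * n + 3 = u.val + ((n - 1 - u.val) * n + (u.val - 2) * (n - 1)) + 1 := by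
      zify [h3n, show u.val ≤ n - 1 by omega, show 2 ≤ u.val from h, show 1 ≤ n by omega]
      ring
    rw [he]
    exact wielandt_reach hn u (n - 1 - u.val) (u.val - 2) 1 (Or.inl rfl)
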